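/- arXiv:1501.00161 — 2 statements merged into one kernel-verified Lean document; each statement's English description precedes it below -/
import Mathlib

section
/- If w : [0,∞) → ℝ≥0 defined along a hybrid time evolution satisfies w(t,j) ≤ e^{λ_c t + λ_d j} w(0,0) while (t,j) ranges over a time domain with minimal average inter-jump time τ (i.e. j ≤ N₀ + t/τ for all (t,j)), λ_c < 0, λ_d ≥ 0 and λ_d + λ_c τ < 0, then w(t,j) → 0 as t → ∞ (with j the corresponding jump count), and moreover w(t,j) ≤ e^{λ_d N₀} w(0,0) for all (t,j). -/
/-- if `w(t,j) ≤ e^{λ_c t + λ_d j} w(0,0)` on a hybrid time domain `E` with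
minimal average inter-jump time `τ` (`j ≤ N₀ + t/τ`), with `λ_c < 0`, `λ_d ≥ 0` and
`λ_d + λ_c τ < 0`, then `w(t,j) ≤ e^{λ_d N₀} w(0,0)` on `E` and `w(t,j) → 0` as `t → ∞`. -/
theorem stmt_9 (E : Set (ℝ × ℕ)) (w : ℝ → ℕ → ℝ) (lc ld τ N0 : ℝ)
    (hlc : lc < 0) (hld : 0 ≤ ld) (hτ : 0 < τ) (hN0 : 0 < N0) (h : ld + lc * τ < 0)
    (hEpos : ∀ p ∈ E, 0 ≤ p.1)
    (hnn : ∀ p ∈ E, 0 ≤ w p.1 p.2)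
    (hbnd : ∀ p ∈ E, w p.1 p.2 ≤ Real.exp (lc * p.1 + ld * (p.2 : ℝ)) * w 0 0)
    (hw0 : 0 ≤ w 0 0)
    (hdwell : ∀ p ∈ E, (p.2 : ℝ) ≤ N0 + p.1 / τ) :
    (∀ p ∈ E, w p.1 p.2 ≤ Real.exp (ld * N0) * w 0 0)
      ∧ (∀ ε > (0 : ℝ), ∃ T : ℝ, ∀ p ∈ E, T ≤ p.1 → w p.1 p.2 < ε) := by
  obtain ⟨α, hα⟩ : ∃ α : ℝ, α = lc + ld / τ := ⟨_, rfl⟩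
  have hαneg : α < 0 := by
    have : α = (ld + lc * τ) / τ := by rw [hα, add_div, mul_div_cancel_right₀ _ hτ.ne', add_comm]
    rw [this]
    exact div_neg_of_neg_of_pos h hτ
  have key : ∀ p ∈ E, lc * p.1 + ld * (p.2 : ℝ) ≤ ld * N0 + α * p.1 := by
    intro p hp
    have h1 : ld * (p.2 : ℝ) ≤ ld * (N0 + p.1 / τ) :=
      mul_le_mul_of_nonneg_left (hdwell p hp) hld
    have h2 : lc * p.1 + ld * (N0 + p.1 / τ) = ld * N0 + α * p.1 := by
      rw [hα]; field_simp; ring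
    linarith
  have key2 : ∀ p ∈ E, w p.1 p.2 ≤ Real.exp (ld * N0 + α * p.1) * w 0 0 := by
    intro p hp
    calc w p.1 p.2 ≤ Real.exp (lc * p.1 + ld * (p.2 : ℝ)) * w 0 0 := hbnd p hp
      _ ≤ Real.exp (ld * N0 + α * p.1) * w 0 0 :=
        mul_le_mul_of_nonneg_right (Real.exp_le_exp.2 (key p hp)) hw0
  constructor
  · intro p hp
    have hαt : α * p.1 ≤ 0 := mul_nonpos_of_nonpos_of_nonneg hαneg.le (hEpos p hp)
    calc w p.1 p.2 ≤ Real.exp (ld * N0 + α * p.1) * w 0 0 := key2 p hp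
      _ ≤ Real.exp (ld * N0) * w 0 0 :=
        mul_le_mul_of_nonneg_right (Real.exp_le_exp.2 (by linarith)) hw0
  · intro ε hε
    rcases eq_or_lt_of_le hw0 with h0 | h0
    · exact ⟨0, fun p hp _ => lt_of_le_of_lt (by simpa [← h0] using key2 p hp) hε⟩
    · refine ⟨(Real.log (ε / (2 * w 0 0)) - ld * N0) / α, fun p hp hT => ?_⟩
      have hexp : ld * N0 + α * p.1 ≤ Real.log (ε / (2 * w 0 0)) := by
        have := mul_le_mul_of_nonpos_left hT hαneg.le
        rw [mul_div_cancel₀ _ hαneg.ne] at this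
        linarith
      have : w p.1 p.2 ≤ (ε / (2 * w 0 0)) * w 0 0 := by
        calc w p.1 p.2 ≤ Real.exp (ld * N0 + α * p.1) * w 0 0 := key2 p hp
          _ ≤ (ε / (2 * w 0 0)) * w 0 0 := by
            refine mul_le_mul_of_nonneg_right ?_ hw0
            calc Real.exp (ld * N0 + α * p.1) ≤ Real.exp (Real.log (ε / (2 * w 0 0))) :=
                Real.exp_le_exp.2 hexp
              _ = ε / (2 * w 0 0) := Real.exp_log (by positivity)
      have heq : (ε / (2 * w 0 0)) * w 0 0 = ε / 2 := by field_simp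
      rw [heq] at this
      linarith
end

section
/- Let J ∈ ℝ^{1×n} be nonzero, L ∈ ℝ^{n×n} invertible, M ∈ ℝⁿ, s ∈ {−1,1} with s(1 + J L⁻¹ M) < 0, and let Ḡ(y) = (L+MJ)y + H + MK + sLJᵀμ with μ = max(0, z₁y+z₂) ≥ 0. Define c_gd(x) = s(JL⁻¹x + K − JL⁻¹H). Then for all y with Jy + K ≤ 0 one has c_gd(Ḡ(y)) = s(1 + JL⁻¹M)(Jy+K) + JJᵀμ ≥ 0. -/
open Matrix

/-- with `Ḡ(y) = (L+MJ)y + H + MK + sLJᵀμ`, `μ = max(0, z₁y+z₂)` and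
`c_gd(x) = s(JL⁻¹x + K − JL⁻¹H)`, if `s(1 + JL⁻¹M) < 0` then for all `y` with `Jy + K ≤ 0`,
`c_gd(Ḡ(y)) = s(1 + JL⁻¹M)(Jy+K) + JJᵀμ ≥ 0`.  Rows/columns are encoded as vectors: `J` is
the vector `j` (a row), `Jᵀ` the same vector as a column, and `JL⁻¹ = vecMul j L⁻¹`. -/
theorem stmt_17 {n : ℕ} (L : Matrix (Fin n) (Fin n) ℝ) (hL : IsUnit L.det)
    (j M H z1 : Fin n → ℝ) (hj : j ≠ 0) (K z2 s : ℝ) (hs : s = 1 ∨ s = -1)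
    (hsc : s * (1 + (vecMul j L⁻¹) ⬝ᵥ M) < 0)
    (μ : (Fin n → ℝ) → ℝ) (hμ : ∀ y, μ y = max 0 (z1 ⬝ᵥ y + z2))
    (Gbar : (Fin n → ℝ) → (Fin n → ℝ))
    (hGbar : ∀ y, Gbar y = L.mulVec y + H + (j ⬝ᵥ y + K) • M + (s * μ y) • L.mulVec j)
    (cgd : (Fin n → ℝ) → ℝ)
    (hcgd : ∀ x, cgd x = s * ((vecMul j L⁻¹) ⬝ᵥ x + K - (vecMul j L⁻¹) ⬝ᵥ H)) :
    ∀ y : Fin n → ℝ, j ⬝ᵥ y + K ≤ 0 →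
      cgd (Gbar y) = s * (1 + (vecMul j L⁻¹) ⬝ᵥ M) * (j ⬝ᵥ y + K) + (j ⬝ᵥ j) * μ y
        ∧ 0 ≤ cgd (Gbar y) := by
  intro y hy
  have key : ∀ v : Fin n → ℝ, (vecMul j L⁻¹) ⬝ᵥ L.mulVec v = j ⬝ᵥ v := by
    intro v
    rw [← dotProduct_mulVec, mulVec_mulVec, nonsing_inv_mul L hL, one_mulVec]
  have heq : cgd (Gbar y) = s * (1 + (vecMul j L⁻¹) ⬝ᵥ M) * (j ⬝ᵥ y + K) + (j ⬝ᵥ j) * μ y := by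
    have hss : s * s = 1 := by rcases hs with h | h <;> simp [h]
    rw [hcgd, hGbar]
    simp only [dotProduct_add, dotProduct_smul, key, smul_eq_mul]
    rcases hs with h | h <;> subst h <;> ring
  refine ⟨heq, ?_⟩
  rw [heq]
  have hjj : 0 ≤ j ⬝ᵥ j := Finset.sum_nonneg fun i _ => mul_self_nonneg (j i)
  have hμy : 0 ≤ μ y := by rw [hμ]; exact le_max_left _ _
  nlinarith [mul_nonneg (neg_nonneg.2 hsc.le) (neg_nonneg.2 hy), mul_nonneg hjj hμy]
end
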